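/- Hermitian unfolding of a single simple pole: if ν ∈ ℝ and K is an s×s positive semidefinite Hermitian matrix, then there exists a Hermitian matrix A = [[0, X],[X*, νI]] whose isospectral reduction to the first s indices equals (λ − ν)⁻¹K. Conversely, if a function of the form (λ−ν)^{−n}K (K ≠ 0, n ≥ 1) equals the isospectral reduction of some Hermitian matrix to a principal block, then n = 1, ν is real, and K is positive semidefinite. -/

import Mathlib

open Matrix ComplexOrder
open Polynomial



lemma good_infinite {r : ℕ} (μ : Fin r → ℂ) (ν : ℂ) :
    {x : ℂ | (∀ i, x ≠ μ i) ∧ x ≠ ν}.Infinite := by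
  have hfin : (Set.range μ ∪ {ν}).Finite :=
    (Set.finite_range μ).union (Set.finite_singleton ν)
  have := hfin.infinite_compl
  apply this.mono
  intro x hx
  simp only [Set.mem_compl_iff, Set.mem_union, Set.mem_range, Set.mem_singleton_iff,
    not_or, not_exists] at hx
  exact ⟨fun i => fun h => hx.1 i h.symm, hx.2⟩

lemma polykey {r nn : ℕ} (μ : Fin r → ℂ) (ν m k : ℂ) (c : Fin r → ℂ)
    (h : ∀ lam : ℂ, (∀ i, lam ≠ μ i) → lam ≠ ν →
      m + ∑ i, (lam - μ i)⁻¹ * c i = ((lam - ν) ^ nn)⁻¹ * k) :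
    (C m * ∏ i, (X - C (μ i)) +
        ∑ i, C (c i) * ∏ j ∈ Finset.univ.erase i, (X - C (μ j))) * (X - C ν) ^ nn
      = C k * ∏ i, (X - C (μ i)) := by
  rw [← sub_eq_zero]
  apply Polynomial.eq_zero_of_infinite_isRoot
  apply (good_infinite μ ν).mono
  intro x hx
  obtain ⟨hx1, hx2⟩ := hx
  have key := h x hx1 hx2
  have hP0 : (∏ i, (x - μ i)) ≠ 0 :=
    Finset.prod_ne_zero_iff.mpr (fun i _ => sub_ne_zero.mpr (hx1 i))
  have hν : (x - ν) ^ nn ≠ 0 := pow_ne_zero _ (sub_ne_zero.mpr hx2)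
  have expand : (∑ i, (x - μ i)⁻¹ * c i) * ∏ i, (x - μ i)
      = ∑ i, c i * ∏ j ∈ Finset.univ.erase i, (x - μ j) := by
    rw [Finset.sum_mul]
    refine Finset.sum_congr rfl fun i _ => ?_
    rw [← Finset.mul_prod_erase _ _ (Finset.mem_univ i)]
    have hxi : x - μ i ≠ 0 := sub_ne_zero.mpr (hx1 i)
    field_simp
  have h2 : (m + ∑ i, (x - μ i)⁻¹ * c i) * ((∏ i, (x - μ i)) * (x - ν) ^ nn)
      = k * ∏ i, (x - μ i) := by
    rw [key]
    field_simp
  simp only [Set.mem_setOf_eq, IsRoot, eval_sub, eval_mul, eval_add, eval_pow, eval_C, eval_X,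
    eval_prod, eval_finset_sum]
  linear_combination h2 - ((x - ν) ^ nn) * expand

lemma main_scalar {r nn : ℕ} (hnn : 1 ≤ nn) (μ : Fin r → ℂ) (ν m k : ℂ) (c : Fin r → ℂ)
    (h : ∀ lam : ℂ, (∀ i, lam ≠ μ i) → lam ≠ ν →
      m + ∑ i, (lam - μ i)⁻¹ * c i = ((lam - ν) ^ nn)⁻¹ * k) :
    m = 0 ∧ (2 ≤ nn → ∑ i, c i = 0) ∧ (nn = 1 → 1 ≤ r → k = ∑ i, c i) ∧
      (nn = 1 → k ≠ 0 → ∃ i, ν = μ i) ∧ (r = 0 → k = 0) := by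
  have hid := polykey μ ν m k c h
  set p : ℂ[X] := ∏ i, (X - C (μ i)) with hp
  set q : Fin r → ℂ[X] := fun i => ∏ j ∈ Finset.univ.erase i, (X - C (μ j)) with hq
  have hpm : p.Monic := monic_prod_of_monic _ _ (fun i _ => monic_X_sub_C _)
  have hpd : p.natDegree = r := by
    rw [hp, natDegree_prod_of_monic _ _ (fun i _ => monic_X_sub_C _)]
    simp [natDegree_X_sub_C]
  have hqm : ∀ i, (q i).Monic := fun i => monic_prod_of_monic _ _ (fun j _ => monic_X_sub_C _)
  have hqd : ∀ i, (q i).natDegree = r - 1 := by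
    intro i
    rw [hq, natDegree_prod_of_monic _ _ (fun j _ => monic_X_sub_C _)]
    simp [natDegree_X_sub_C, Finset.card_erase_of_mem]
  have hgm : ((X - C ν) ^ nn).Monic := (monic_X_sub_C ν).pow _
  have hgd : ((X - C ν) ^ nn).natDegree = nn := by
    simp [natDegree_pow, natDegree_X_sub_C]
  have hg1 : ((X - C ν) ^ nn).coeff nn = 1 := by
    have := hgm.coeff_natDegree
    rwa [hgd] at this
  have hqcoeff : ∀ i : Fin r, (q i).coeff (r - 1) = 1 := by
    intro i
    have := (hqm i).coeff_natDegree
    rwa [hqd] at this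
  have hqzero : ∀ i : Fin r, (q i).coeff r = 0 := by
    intro i
    apply coeff_eq_zero_of_natDegree_lt
    rw [hqd i]
    exact Nat.sub_lt i.pos one_pos
  set L : ℂ[X] := C m * p + ∑ i, C (c i) * q i with hL
  have hLd : L.natDegree ≤ r := by
    refine le_trans (natDegree_add_le _ _) (max_le ?_ ?_)
    · exact le_trans (natDegree_C_mul_le _ _) hpd.le
    · refine natDegree_sum_le_of_forall_le _ _ fun i _ => ?_
      refine le_trans (natDegree_C_mul_le _ _) ?_
      rw [hqd i]; omega
  have hLcoeff : L.coeff r = m := by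
    rw [hL, coeff_add, coeff_C_mul, finset_sum_coeff]
    have : ∀ i ∈ Finset.univ, (C (c i) * q i).coeff r = 0 := by
      intro i _
      rw [coeff_C_mul, hqzero i, mul_zero]
    rw [Finset.sum_eq_zero this, add_zero, ← hpd, hpm.coeff_natDegree, mul_one]
  have hm : m = 0 := by
    have h0 : (L * (X - C ν) ^ nn).coeff (r + nn) = (C k * p).coeff (r + nn) := by rw [hid]
    rw [coeff_mul_add_eq_of_natDegree_le hLd hgd.le, hg1, hLcoeff, mul_one, coeff_C_mul,
      coeff_eq_zero_of_natDegree_lt (by omega : p.natDegree < r + nn), mul_zero] at h0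
    exact h0
  set S : ℂ[X] := ∑ i, C (c i) * q i with hS
  have hid2 : S * (X - C ν) ^ nn = C k * p := by
    rw [hL, hm] at hid
    simpa using hid
  have hSd : S.natDegree ≤ r - 1 := by
    refine natDegree_sum_le_of_forall_le _ _ fun i _ => ?_
    exact le_trans (natDegree_C_mul_le _ _) (hqd i).le
  have hScoeff : S.coeff (r - 1) = ∑ i, c i := by
    rw [hS, finset_sum_coeff]
    refine Finset.sum_congr rfl fun i _ => ?_
    rw [coeff_C_mul, hqcoeff i, mul_one]
  refine ⟨hm, ?_, ?_, ?_, ?_⟩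
  · intro h2
    have h0 : (S * (X - C ν) ^ nn).coeff (r - 1 + nn) = (C k * p).coeff (r - 1 + nn) := by
      rw [hid2]
    rw [coeff_mul_add_eq_of_natDegree_le hSd hgd.le, hg1, hScoeff, mul_one, coeff_C_mul,
      coeff_eq_zero_of_natDegree_lt (by omega : p.natDegree < r - 1 + nn), mul_zero] at h0
    exact h0
  · intro h1 hr
    subst h1
    have h0 : (S * (X - C ν) ^ 1).coeff (r - 1 + 1) = (C k * p).coeff (r - 1 + 1) := by
      rw [hid2]
    rw [coeff_mul_add_eq_of_natDegree_le hSd hgd.le, hg1, hScoeff, mul_one, coeff_C_mul,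
      (by omega : r - 1 + 1 = r)] at h0
    have hp1 : p.coeff r = 1 := by rw [← hpd]; exact hpm.coeff_natDegree
    rw [hp1, mul_one] at h0
    exact h0.symm
  · intro h1 hk
    subst h1
    have h0 := congrArg (fun P => Polynomial.eval ν P) hid2
    simp only [eval_mul, eval_pow, eval_sub, eval_X, eval_C, sub_self, pow_one, mul_zero,
      eval_prod, hp] at h0
    have := h0.symm
    rw [mul_eq_zero] at this
    rcases this with h' | h'
    · exact absurd h' hk
    · obtain ⟨i, _, hi⟩ := Finset.prod_eq_zero_iff.mp h'
      exact ⟨i, sub_eq_zero.mp hi⟩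
  · intro hr
    subst hr
    have hS0 : S = 0 := by
      rw [hS, Finset.univ_eq_empty, Finset.sum_empty]
    rw [hS0, zero_mul] at hid2
    have := hid2.symm
    rcases mul_eq_zero.mp this with h' | h'
    · exact (C_eq_zero.mp h')
    · exact absurd h' hpm.ne_zero


lemma exists_quadform_ne_zero {n : ℕ} (K : Matrix (Fin n) (Fin n) ℂ) (hK : K ≠ 0) :
    ∃ v : Fin n → ℂ, star v ⬝ᵥ K *ᵥ v ≠ 0 := by
  by_contra hc
  push_neg at hc
  apply hK
  have hB : ∀ x y : Fin n → ℂ, star x ⬝ᵥ K *ᵥ y = 0 := by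
    intro x y
    have e1 : star (x + y) ⬝ᵥ K *ᵥ (x + y)
        = (star x ⬝ᵥ K *ᵥ x) + (star x ⬝ᵥ K *ᵥ y) + ((star y ⬝ᵥ K *ᵥ x) + (star y ⬝ᵥ K *ᵥ y)) := by
      rw [star_add, add_dotProduct, Matrix.mulVec_add, dotProduct_add, dotProduct_add]
    have e2 : star (x + Complex.I • y) ⬝ᵥ K *ᵥ (x + Complex.I • y)
        = (star x ⬝ᵥ K *ᵥ x) + Complex.I * (star x ⬝ᵥ K *ᵥ y)
          - Complex.I * (star y ⬝ᵥ K *ᵥ x) + (star y ⬝ᵥ K *ᵥ y) := by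
      rw [star_add, star_smul, add_dotProduct, Matrix.mulVec_add, Matrix.mulVec_smul,
        dotProduct_add, dotProduct_add, smul_dotProduct, dotProduct_smul, smul_dotProduct,
        dotProduct_smul]
      simp only [smul_eq_mul, Complex.star_def, Complex.conj_I]
      ring_nf
      linear_combination (-(star y ⬝ᵥ K *ᵥ y)) * Complex.I_sq
    rw [hc, hc x, hc y] at e1 e2
    have h1 : (star x ⬝ᵥ K *ᵥ y) + (star y ⬝ᵥ K *ᵥ x) = 0 := by linear_combination -e1
    have h2 : Complex.I * (star x ⬝ᵥ K *ᵥ y) = Complex.I * (star y ⬝ᵥ K *ᵥ x) := by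
      linear_combination -e2
    have h2' : (star x ⬝ᵥ K *ᵥ y) = star y ⬝ᵥ K *ᵥ x :=
      mul_left_cancel₀ Complex.I_ne_zero h2
    linear_combination h1 / 2 + h2' / 2
  ext i j
  have := hB (Pi.single i 1 : Fin n → ℂ) (Pi.single j 1 : Fin n → ℂ)
  have hsl : star (Pi.single i (1:ℂ)) = (Pi.single i 1 : Fin n → ℂ) := by
    ext l; simp [Pi.single_apply, apply_ite]
  rw [hsl, single_dotProduct, one_mul, Matrix.mulVec_single] at this
  simpa using this


/-- Isospectral reduction of a matrix indexed by `α ⊕ β` down to `α`. -/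
noncomputable def red {α β : Type} [Fintype α] [Fintype β] [DecidableEq α] [DecidableEq β]
    (lam : ℂ) (A : Matrix (α ⊕ β) (α ⊕ β) ℂ) : Matrix α α ℂ :=
  A.toBlocks₁₁ + A.toBlocks₁₂ * (lam • (1 : Matrix β β ℂ) - A.toBlocks₂₂)⁻¹ * A.toBlocks₂₁

theorem part2 (s : ℕ) (ν : ℂ) (nn : ℕ) (K : Matrix (Fin s) (Fin s) ℂ) (hK : K ≠ 0)
    (hnn : 1 ≤ nn) (r : ℕ) (A : Matrix (Fin s ⊕ Fin r) (Fin s ⊕ Fin r) ℂ)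
    (hA : A.IsHermitian)
    (hred : ∀ lam : ℂ, IsUnit (lam • (1 : Matrix (Fin r) (Fin r) ℂ) - A.toBlocks₂₂).det →
      red lam A = ((lam - ν) ^ nn)⁻¹ • K) :
    nn = 1 ∧ ν.im = 0 ∧ K.PosSemidef := by
  set F : Matrix (Fin r) (Fin r) ℂ := A.toBlocks₂₂ with hF_def
  set B : Matrix (Fin s) (Fin r) ℂ := A.toBlocks₁₂ with hB_def
  set M : Matrix (Fin s) (Fin s) ℂ := A.toBlocks₁₁ with hM_def
  have hFH : F.IsHermitian := by
    ext i j
    simpa [hF_def, Matrix.toBlocks₂₂, Matrix.conjTranspose_apply] using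
      hA.apply (Sum.inr i) (Sum.inr j)
  have hD : A.toBlocks₂₁ = Bᴴ := by
    ext i j
    simpa [hB_def, Matrix.toBlocks₂₁, Matrix.toBlocks₁₂, Matrix.conjTranspose_apply] using
      (hA.apply (Sum.inr i) (Sum.inl j)).symm
  set U : Matrix (Fin r) (Fin r) ℂ := (hFH.eigenvectorUnitary : Matrix (Fin r) (Fin r) ℂ) with hU_def
  set μ : Fin r → ℂ := fun i => (hFH.eigenvalues i : ℂ) with hμ_def
  set E : Matrix (Fin s) (Fin r) ℂ := B * U with hE_def
  have hU1 : U * Uᴴ = 1 := by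
    rw [← star_eq_conjTranspose]
    exact Matrix.mem_unitaryGroup_iff.mp hFH.eigenvectorUnitary.2
  have hU2 : Uᴴ * U = 1 := by
    rw [← star_eq_conjTranspose]
    exact Matrix.mem_unitaryGroup_iff'.mp hFH.eigenvectorUnitary.2
  have hdec : ∀ lam : ℂ, lam • (1 : Matrix (Fin r) (Fin r) ℂ) - F
      = U * diagonal (fun i => lam - μ i) * Uᴴ := by
    intro lam
    have hspec : F = U * diagonal (RCLike.ofReal ∘ hFH.eigenvalues) * Uᴴ := by
      rw [← star_eq_conjTranspose]; exact hFH.spectral_theorem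
    have hdiag : diagonal (fun i => lam - μ i)
        = (lam • (1 : Matrix (Fin r) (Fin r) ℂ)) - diagonal (RCLike.ofReal ∘ hFH.eigenvalues) := by
      rw [smul_one_eq_diagonal, ← diagonal_sub]
      rfl
    rw [hdiag, Matrix.mul_sub, Matrix.sub_mul, ← hspec, Matrix.mul_smul, Matrix.mul_one,
      Matrix.smul_mul, hU1]
  -- resolvent
  have hdet : ∀ lam : ℂ, (∀ i, lam ≠ μ i) →
      IsUnit (lam • (1 : Matrix (Fin r) (Fin r) ℂ) - F).det := by
    intro lam hlam
    rw [hdec lam, det_mul, det_mul, det_diagonal]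
    rw [isUnit_iff_ne_zero]
    have h1 : U.det * Uᴴ.det = 1 := by rw [← det_mul, hU1, det_one]
    intro hcon
    have : U.det * Uᴴ.det * ∏ i, (lam - μ i) = 0 := by
      rw [← hcon]; ring
    rw [h1, one_mul] at this
    obtain ⟨i, _, hi⟩ := Finset.prod_eq_zero_iff.mp this
    exact hlam i (sub_eq_zero.mp hi)
  have hinv : ∀ lam : ℂ, (∀ i, lam ≠ μ i) →
      (lam • (1 : Matrix (Fin r) (Fin r) ℂ) - F)⁻¹
        = U * diagonal (fun i => (lam - μ i)⁻¹) * Uᴴ := by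
    intro lam hlam
    apply Matrix.inv_eq_right_inv
    rw [hdec lam]
    calc U * diagonal (fun i => lam - μ i) * Uᴴ * (U * diagonal (fun i => (lam - μ i)⁻¹) * Uᴴ)
        = U * (diagonal (fun i => lam - μ i) * (Uᴴ * U) * diagonal (fun i => (lam - μ i)⁻¹)) * Uᴴ := by
          simp only [Matrix.mul_assoc]
      _ = 1 := by
          rw [hU2, Matrix.mul_one, diagonal_mul_diagonal]
          have : (fun i => (lam - μ i) * (lam - μ i)⁻¹) = fun _ => (1:ℂ) := by
            funext i
            exact mul_inv_cancel₀ (sub_ne_zero.mpr (hlam i))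
          rw [this, diagonal_one, Matrix.mul_one, hU1]
  -- the key scalar identity
  have key : ∀ x y : Fin s → ℂ, ∀ lam : ℂ, (∀ i, lam ≠ μ i) → lam ≠ ν →
      (star x ⬝ᵥ M *ᵥ y) + ∑ i, (lam - μ i)⁻¹ * (star ((Eᴴ *ᵥ x) i) * ((Eᴴ *ᵥ y) i))
        = ((lam - ν) ^ nn)⁻¹ * (star x ⬝ᵥ K *ᵥ y) := by
    intro x y lam hlam hlamν
    have hredlam := hred lam (hdet lam hlam)
    have hexp : red lam A = M + E * diagonal (fun i => (lam - μ i)⁻¹) * Eᴴ := by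
      rw [red, hD, hinv lam hlam, hE_def, conjTranspose_mul]
      simp only [Matrix.mul_assoc]
      rfl
    rw [hexp] at hredlam
    have happ := congrArg (fun N => star x ⬝ᵥ N *ᵥ y) hredlam
    rw [Matrix.add_mulVec, dotProduct_add, smul_mulVec, dotProduct_smul, smul_eq_mul]
      at happ
    convert happ using 2
    rw [← Matrix.mulVec_mulVec, ← Matrix.mulVec_mulVec, dotProduct_mulVec (star x) E,
      show star x ᵥ* E = star (Eᴴ *ᵥ x) by rw [star_mulVec, conjTranspose_conjTranspose]]
    rw [dotProduct]
    refine Finset.sum_congr rfl fun i _ => ?_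
    rw [Matrix.mulVec_diagonal]
    simp only [Pi.star_apply]
    ring
  obtain ⟨v₀, hv₀⟩ := exists_quadform_ne_zero K hK
  have main : ∀ x y : Fin s → ℂ,
      (star x ⬝ᵥ M *ᵥ y) = 0 ∧
      (2 ≤ nn → ∑ i, (star ((Eᴴ *ᵥ x) i) * ((Eᴴ *ᵥ y) i)) = 0) ∧
      (nn = 1 → 1 ≤ r → (star x ⬝ᵥ K *ᵥ y) = ∑ i, (star ((Eᴴ *ᵥ x) i) * ((Eᴴ *ᵥ y) i))) ∧
      (nn = 1 → (star x ⬝ᵥ K *ᵥ y) ≠ 0 → ∃ i, ν = μ i) ∧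
      (r = 0 → (star x ⬝ᵥ K *ᵥ y) = 0) :=
    fun x y => main_scalar hnn μ ν _ _ _ (key x y)
  have hnn1 : nn = 1 := by
    by_contra hne
    have h2 : 2 ≤ nn := by omega
    have hsum := (main v₀ v₀).2.1 h2
    have hw : ∀ i, (Eᴴ *ᵥ v₀) i = 0 := by
      have hcast : ((∑ i, Complex.normSq ((Eᴴ *ᵥ v₀) i) : ℝ) : ℂ) = 0 := by
        push_cast
        rw [← hsum]
        refine Finset.sum_congr rfl fun i _ => ?_
        rw [Complex.normSq_eq_conj_mul_self]
        rfl
      have hreal : ∑ i, Complex.normSq ((Eᴴ *ᵥ v₀) i) = 0 := by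
        exact_mod_cast hcast
      intro i
      have := (Finset.sum_eq_zero_iff_of_nonneg
        (fun i _ => Complex.normSq_nonneg _)).mp hreal i (Finset.mem_univ i)
      exact Complex.normSq_eq_zero.mp this
    obtain ⟨lam, hlam⟩ := (good_infinite μ ν).nonempty
    have hk := key v₀ v₀ lam hlam.1 hlam.2
    rw [(main v₀ v₀).1] at hk
    have hzero : ∑ i, (lam - μ i)⁻¹ * (star ((Eᴴ *ᵥ v₀) i) * ((Eᴴ *ᵥ v₀) i)) = 0 := by
      refine Finset.sum_eq_zero fun i _ => ?_
      rw [hw i, mul_zero, mul_zero]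
    rw [hzero, zero_add] at hk
    have hinvne : ((lam - ν) ^ nn)⁻¹ ≠ 0 :=
      inv_ne_zero (pow_ne_zero _ (sub_ne_zero.mpr hlam.2))
    exact hv₀ (by
      rcases mul_eq_zero.mp hk.symm with h | h
      · exact absurd h hinvne
      · exact h)
  have hr : 1 ≤ r := by
    by_contra hrc
    have hr0 : r = 0 := by omega
    exact hv₀ ((main v₀ v₀).2.2.2.2 hr0)
  have him : ν.im = 0 := by
    obtain ⟨i, hi⟩ := (main v₀ v₀).2.2.2.1 hnn1 hv₀
    rw [hi, hμ_def]
    exact Complex.ofReal_im _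
  have hKE : K = E * Eᴴ := by
    ext i j
    have h3 := (main (Pi.single i 1 : Fin s → ℂ) (Pi.single j 1 : Fin s → ℂ)).2.2.1 hnn1 hr
    have hsl : star (Pi.single i (1:ℂ)) = (Pi.single i 1 : Fin s → ℂ) := by
      ext l; simp [Pi.single_apply, apply_ite]
    rw [hsl, single_dotProduct, one_mul, Matrix.mulVec_single_one] at h3
    simp only [col_apply] at h3
    rw [h3, Matrix.mul_apply]
    refine Finset.sum_congr rfl fun l _ => ?_
    simp [Matrix.mulVec_single, Matrix.conjTranspose_apply]
  exact ⟨hnn1, him, by rw [hKE]; exact posSemidef_self_mul_conjTranspose E⟩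

open scoped MatrixOrder in
lemma psd_sqrt_facts {s : ℕ} (K : Matrix (Fin s) (Fin s) ℂ) (hK : K.PosSemidef) :
    ∃ X : Matrix (Fin s) (Fin s) ℂ, Xᴴ = X ∧ X * X = K :=
  ⟨CFC.sqrt K, (CFC.sqrt_nonneg K).posSemidef.1.eq, CFC.sqrt_mul_sqrt_self K hK.nonneg⟩

theorem stmt_14 (s : ℕ) :
    -- Sufficiency: a single simple real pole with PSD residue has a Hermitian unfolding
    -- of the form `[[0, X], [X*, νI]]`.
    (∀ (ν : ℝ) (K : Matrix (Fin s) (Fin s) ℂ), K.PosSemidef →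
      ∃ (r : ℕ) (X : Matrix (Fin s) (Fin r) ℂ),
        (Matrix.fromBlocks 0 X Xᴴ ((ν : ℂ) • (1 : Matrix (Fin r) (Fin r) ℂ))).IsHermitian ∧
        ∀ lam : ℂ, lam ≠ (ν : ℂ) →
          red lam (Matrix.fromBlocks 0 X Xᴴ ((ν : ℂ) • (1 : Matrix (Fin r) (Fin r) ℂ))) =
            (lam - (ν : ℂ))⁻¹ • K) ∧
    -- Necessity: if `(λ-ν)^{-n} K` (with `K ≠ 0`, `n ≥ 1`) is the reduction of a Hermitian
    -- matrix, then `n = 1`, `ν` is real, and `K` is positive semidefinite.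
    (∀ (ν : ℂ) (nn : ℕ) (K : Matrix (Fin s) (Fin s) ℂ), K ≠ 0 → 1 ≤ nn →
      ∀ (r : ℕ) (A : Matrix (Fin s ⊕ Fin r) (Fin s ⊕ Fin r) ℂ), A.IsHermitian →
        (∀ lam : ℂ, IsUnit (lam • (1 : Matrix (Fin r) (Fin r) ℂ) - A.toBlocks₂₂).det →
          red lam A = ((lam - ν) ^ nn)⁻¹ • K) →
        nn = 1 ∧ ν.im = 0 ∧ K.PosSemidef) := by
  constructor
  · intro ν K hK

    obtain ⟨Xs, hXs1, hXs2⟩ := psd_sqrt_facts K hK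
    refine ⟨s, Xs, ?_, ?_⟩
    · rw [Matrix.IsHermitian, fromBlocks_conjTranspose]
      rw [conjTranspose_zero, conjTranspose_conjTranspose, conjTranspose_smul,
        conjTranspose_one, hXs1]
      norm_num
    · intro lam hlam
      have hc : lam - (ν:ℂ) ≠ 0 := sub_ne_zero.mpr hlam
      have hinv : (lam • (1 : Matrix (Fin s) (Fin s) ℂ) - (ν:ℂ) • 1)⁻¹
          = (lam - (ν:ℂ))⁻¹ • 1 := by
        rw [← sub_smul]
        rw [Matrix.inv_eq_right_inv]
        rw [smul_mul_smul_comm, one_mul, mul_inv_cancel₀ hc, one_smul]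
      rw [red]
      simp only [toBlocks_fromBlocks₁₁, toBlocks_fromBlocks₁₂, toBlocks_fromBlocks₂₁,
        toBlocks_fromBlocks₂₂, hinv]
      rw [Matrix.mul_smul, Matrix.mul_one, Matrix.smul_mul, hXs1,
        hXs2]
      simp
  · intro ν nn K hK hnn r A hA hred
    exact part2 s ν nn K hK hnn r A hA hred
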